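/- Let a(h) = hᵀ H h > 0 for H symmetric positive definite, and let A_L, A_R be real numbers depending on two states with denominator a > 0. Suppose S_L ≤ 0 ≤ S_R with S_L < S_R. If S_L ≤ −A_R⁺ − √(A_L⁺ A_R⁺) and S_R ≥ A_L⁺ + √(A_L⁺ A_R⁺), where x⁺ = max(x, 0), then (−S_L − A_R)(S_R − A_L) ≥ A_L A_R. -/
import Mathlib

/-- Entropy-stable HLL signal-speed condition. -/
theorem es_hll_signal_speeds (AL AR SL SR : ℝ)
    (hSL : SL ≤ 0) (hSR : 0 ≤ SR) (hlt : SL < SR)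
    (hL : SL ≤ -(max AR 0) - Real.sqrt (max AL 0 * max AR 0))
    (hR : SR ≥ max AL 0 + Real.sqrt (max AL 0 * max AR 0)) :
    (-SL - AR) * (SR - AL) ≥ AL * AR := by
  set s := Real.sqrt (max AL 0 * max AR 0) with hs
  have hprod : (0:ℝ) ≤ max AL 0 * max AR 0 :=
    mul_nonneg (le_max_right _ _) (le_max_right _ _)
  have hs2 : s ^ 2 = max AL 0 * max AR 0 := Real.sq_sqrt hprod
  have hsnn : 0 ≤ s := Real.sqrt_nonneg _
  have h1 : AL ≤ max AL 0 := le_max_left _ _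
  have h2 : AR ≤ max AR 0 := le_max_left _ _
  have h3 : (0:ℝ) ≤ max AL 0 := le_max_right _ _
  have h4 : (0:ℝ) ≤ max AR 0 := le_max_right _ _
  nlinarith [mul_le_mul (by linarith : max AR 0 - AR + s ≤ -SL - AR)
    (by linarith : max AL 0 - AL + s ≤ SR - AL) (by nlinarith) (by linarith),
    mul_nonneg h3 (by linarith : (0:ℝ) ≤ max AR 0 - AR),
    mul_nonneg h4 (by linarith : (0:ℝ) ≤ max AL 0 - AL),
    mul_nonneg hsnn (by linarith : (0:ℝ) ≤ max AR 0 - AR + (max AL 0 - AL))]
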